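/- Let s ≤ t be real numbers and let U, ρ : [s,t] × ℝ → ℝ be continuous functions, 2π-periodic in the second (spatial) variable, such that ρ is continuously differentiable in time and twice continuously differentiable in space with jointly continuous derivatives. Assume that for every r ∈ [s,t] the function z ↦ ρ(r,z) is mean-zero, and that ∂_r ρ(r,z) = ∂_z²ρ(r,z) + ρ(r,z) − 3U(r,z)²ρ(r,z) for all (r,z). Then ∫₀^{2π} ρ(t,z)² dz ≤ ∫₀^{2π} ρ(s,z)² dz. -/

import Mathlib

open MeasureTheory Set AddCircle ContinuousMap Complex intervalIntegral

lemma parseval_cont {T : ℝ} [hT : Fact (0 < T)] (F : C(AddCircle T, ℂ)) :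
    HasSum (fun n : ℤ => ‖fourierCoeff (⇑F) n‖ ^ 2)
      (∫ t : AddCircle T, ‖F t‖ ^ 2 ∂haarAddCircle) := by
  set g := toLp (E := ℂ) 2 haarAddCircle ℂ F with hg
  have hrepr : ∀ n : ℤ, fourierBasis.repr g n = fourierCoeff (⇑F) n := fun n => by
    rw [fourierBasis_repr, hg, fourierCoeff_toLp]
  have hsum : Summable (fun n : ℤ => ‖fourierCoeff (⇑F) n‖ ^ 2) := by
    have hm : Memℓp (fourierBasis.repr g : ℤ → ℂ) 2 := (fourierBasis.repr g).property
    have := (memℓp_gen_iff (p := 2) (by norm_num)).1 hm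
    simp only [hrepr] at this
    have h2 : ((2 : ENNReal)).toReal = (2:ℝ) := by norm_num
    rw [h2] at this
    convert this using 2 with n
    rw [← Real.rpow_natCast ‖fourierCoeff (⇑F) n‖ 2]
    norm_num
  have hps := tsum_sq_fourierCoeff g
  simp only [hg, fourierCoeff_toLp] at hps
  have hcongr : ∫ t : AddCircle T, ‖g t‖ ^ 2 ∂haarAddCircle
      = ∫ t : AddCircle T, ‖F t‖ ^ 2 ∂haarAddCircle := by
    refine integral_congr_ae ?_
    filter_upwards [coeFn_toLp (p := 2) (μ := haarAddCircle) (𝕜 := ℂ) F] with x hx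
    rw [hx]
  -- hps : ∑' i, ‖fourierCoeff F i‖^2 = ∫ t, ‖g t‖^2
  rw [hcongr] at hps
  rw [← hps]; exact hsum.hasSum

lemma haar_integral_sq {T : ℝ} [hT : Fact (0 < T)] (h : ℝ → ℝ)
    (hc : Continuous fun x => (h x : ℂ)) (hp : h (0 + T) = h 0) :
    ∫ t : AddCircle T, ‖liftIco T 0 (fun x => (h x : ℂ)) t‖ ^ 2 ∂haarAddCircle
      = (1 / T) * ∫ x in (0:ℝ)..T, h x ^ 2 := by
  have h1 : ∫ x in (0:ℝ)..(0 + T), ‖liftIco T 0 (fun x => (h x : ℂ)) ↑x‖ ^ 2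
      = ∫ t : AddCircle T, ‖liftIco T 0 (fun x => (h x : ℂ)) t‖ ^ 2 ∂volume :=
    AddCircle.intervalIntegral_preimage T 0
      (fun t => ‖liftIco T 0 (fun x => (h x : ℂ)) t‖ ^ 2)
  have h2 : ∫ x in (0:ℝ)..(0 + T), ‖liftIco T 0 (fun x => (h x : ℂ)) ↑x‖ ^ 2
      = ∫ x in (0:ℝ)..T, h x ^ 2 := by
    rw [zero_add]
    apply intervalIntegral.integral_congr
    intro x hx
    dsimp only
    rw [uIcc_of_le hT.out.le] at hx
    rcases eq_or_lt_of_le hx.2 with heq | hlt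
    · have hcoe : ((x : ℝ) : AddCircle T) = ((0:ℝ) : AddCircle T) := by
        rw [heq]; simpa using AddCircle.coe_add_period T 0
      rw [hcoe, liftIco_coe_apply (by simp [hT.out] : (0:ℝ) ∈ Ico (0:ℝ) (0 + T))]
      rw [heq, ← zero_add T, hp]
      simp [Complex.norm_real, Real.norm_eq_abs, sq_abs]
    · rw [liftIco_coe_apply (by simpa using ⟨hx.1, hlt⟩ : x ∈ Ico (0:ℝ) (0 + T))]
      simp [Complex.norm_real, Real.norm_eq_abs, sq_abs]
  rw [volume_eq_smul_haarAddCircle, MeasureTheory.integral_smul_measure,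
    ENNReal.toReal_ofReal hT.out.le, smul_eq_mul] at h1
  rw [h2] at h1
  rw [h1]
  have hT0 : T ≠ 0 := hT.out.ne'
  field_simp

lemma wirtinger_aux (f f' : ℝ → ℝ) (hf'c : Continuous f')
    (hd : ∀ x, HasDerivAt f (f' x) x)
    (hper : ∀ x, f (x + 2 * Real.pi) = f x)
    (hmean : (∫ x in (0:ℝ)..(2 * Real.pi), f x) = 0) :
    (∫ x in (0:ℝ)..(2 * Real.pi), f x ^ 2)
      ≤ ∫ x in (0:ℝ)..(2 * Real.pi), f' x ^ 2 := by
  haveI hT : Fact (0 < 2 * Real.pi) := ⟨Real.two_pi_pos⟩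
  have hfc : Continuous f := by
    refine continuous_iff_continuousAt.2 fun x => (hd x).continuousAt
  have hgc : Continuous fun x => ((f x : ℂ)) := Complex.continuous_ofReal.comp hfc
  have hg'c : Continuous fun x => ((f' x : ℂ)) := Complex.continuous_ofReal.comp hf'c
  set g : ℝ → ℂ := fun x => (f x : ℂ) with hgdef
  set g' : ℝ → ℂ := fun x => (f' x : ℂ) with hg'def
  have hf'per : ∀ x, f' (x + 2 * Real.pi) = f' x := by
    intro x
    have h2 : HasDerivAt (fun y => f (y + 2 * Real.pi)) (f' (x + 2 * Real.pi)) x :=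
      HasDerivAt.comp_add_const x _ (hd (x + 2 * Real.pi))
    have h3 : (fun y => f (y + 2 * Real.pi)) = f := funext hper
    rw [h3] at h2
    exact h2.unique (hd x)
  have hg0 : g 0 = g (0 + (2 * Real.pi)) := by
    show ((f 0 : ℝ) : ℂ) = ((f (0 + 2 * Real.pi) : ℝ) : ℂ)
    rw [hper 0]
  have hg'0 : g' 0 = g' (0 + (2 * Real.pi)) := by
    show ((f' 0 : ℝ) : ℂ) = ((f' (0 + 2 * Real.pi) : ℝ) : ℂ)
    rw [hf'per 0]
  set F : C(AddCircle (2 * Real.pi), ℂ) :=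
    ⟨liftIco (2 * Real.pi) 0 g, liftIco_continuous hg0 hgc.continuousOn⟩ with hFdef
  set F' : C(AddCircle (2 * Real.pi), ℂ) :=
    ⟨liftIco (2 * Real.pi) 0 g', liftIco_continuous hg'0 hg'c.continuousOn⟩ with hF'def
  have hab : (0:ℝ) < 0 + 2 * Real.pi := lt_add_of_pos_right 0 hT.out
  have hcF : ∀ n : ℤ, fourierCoeff (⇑F) n = fourierCoeffOn hab g n := fun n =>
    fourierCoeff_liftIco_eq g n
  have hcF' : ∀ n : ℤ, fourierCoeff (⇑F') n = fourierCoeffOn hab g' n := fun n =>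
    fourierCoeff_liftIco_eq g' n
  -- zeroth coefficient of g vanishes
  have hc0 : fourierCoeffOn hab g 0 = 0 := by
    rw [fourierCoeffOn_eq_integral]
    simp only [neg_zero, fourier_zero, one_smul, zero_add, sub_zero, hgdef]
    rw [intervalIntegral.integral_ofReal, hmean]
    simp
  -- coefficient relation for n ≠ 0
  have hrel : ∀ n : ℤ, n ≠ 0 →
      fourierCoeffOn hab g' n = Complex.I * n * fourierCoeffOn hab g n := by
    intro n hn
    have hIBP := fourierCoeffOn_of_hasDerivAt hab hn
      (fun x _ => (hd x).ofReal_comp) (hg'c.intervalIntegrable _ _)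
    simp only [hper 0, sub_self, mul_zero, zero_sub] at hIBP
    simp only [← hgdef, ← hg'def] at hIBP
    rw [hIBP]
    have hπ : (Real.pi : ℂ) ≠ 0 := Complex.ofReal_ne_zero.2 Real.pi_ne_zero
    have hn' : (n : ℂ) ≠ 0 := Int.cast_ne_zero.2 hn
    have hI := Complex.I_ne_zero
    push_cast
    field_simp
    ring
  -- norm comparison
  have hcomp : ∀ n : ℤ, ‖fourierCoeff (⇑F) n‖ ^ 2 ≤ ‖fourierCoeff (⇑F') n‖ ^ 2 := by
    intro n
    rcases eq_or_ne n 0 with rfl | hn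
    · rw [hcF, hc0]
      simpa using sq_nonneg ‖fourierCoeff (⇑F') 0‖
    · rw [hcF, hcF', hrel n hn]
      have h1 : ‖Complex.I * n * fourierCoeffOn hab g n‖
          = |(n:ℝ)| * ‖fourierCoeffOn hab g n‖ := by
        rw [norm_mul, norm_mul, Complex.norm_I, one_mul]
        norm_num [Complex.norm_intCast]
      rw [h1]
      have h2 : (1:ℝ) ≤ |(n:ℝ)| := by
        rw [← Int.cast_abs]
        exact_mod_cast Int.one_le_abs hn
      have h3 : ‖fourierCoeffOn hab g n‖ ≤ |(n:ℝ)| * ‖fourierCoeffOn hab g n‖ := by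
        nlinarith [norm_nonneg (fourierCoeffOn hab g n)]
      nlinarith [norm_nonneg (fourierCoeffOn hab g n),
        abs_nonneg ((n:ℝ))]
  have key := hasSum_le hcomp (parseval_cont F) (parseval_cont F')
  have e1 : ∫ t : AddCircle (2 * Real.pi), ‖F t‖ ^ 2 ∂haarAddCircle
      = (1 / (2 * Real.pi)) * ∫ x in (0:ℝ)..(2 * Real.pi), f x ^ 2 :=
    haar_integral_sq f hgc (hper 0)
  have e2 : ∫ t : AddCircle (2 * Real.pi), ‖F' t‖ ^ 2 ∂haarAddCircle
      = (1 / (2 * Real.pi)) * ∫ x in (0:ℝ)..(2 * Real.pi), f' x ^ 2 :=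
    haar_integral_sq f' hg'c (hf'per 0)
  rw [e1, e2] at key
  have hpos : (0:ℝ) < 1 / (2 * Real.pi) := by positivity
  exact (mul_le_mul_iff_right₀ hpos).1 key

/-- Pathwise contraction for the first variation equation
`∂_r ρ = ∂_z²ρ + ρ − 3U²ρ` on `[s,t] × ℝ` with `2π`-periodicity in space and
mean-zero spatial slices: `∫₀^{2π} ρ(t,z)² dz ≤ ∫₀^{2π} ρ(s,z)² dz`.
The spatial derivative `ρz` and second spatial derivative `ρzz`, and the time
derivative `ρt`, are given as jointly continuous functions on the domain. -/
theorem stmt_5 (s t : ℝ) (hst : s ≤ t)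
    (U ρ ρt ρz ρzz : ℝ → ℝ → ℝ)
    (hUcont : ContinuousOn (fun p : ℝ × ℝ => U p.1 p.2) (Set.Icc s t ×ˢ Set.univ))
    (hρcont : ContinuousOn (fun p : ℝ × ℝ => ρ p.1 p.2) (Set.Icc s t ×ˢ Set.univ))
    (hρtcont : ContinuousOn (fun p : ℝ × ℝ => ρt p.1 p.2) (Set.Icc s t ×ˢ Set.univ))
    (hρzcont : ContinuousOn (fun p : ℝ × ℝ => ρz p.1 p.2) (Set.Icc s t ×ˢ Set.univ))
    (hρzzcont : ContinuousOn (fun p : ℝ × ℝ => ρzz p.1 p.2) (Set.Icc s t ×ˢ Set.univ))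
    (hUper : ∀ r ∈ Set.Icc s t, ∀ z : ℝ, U r (z + 2 * Real.pi) = U r z)
    (hρper : ∀ r ∈ Set.Icc s t, ∀ z : ℝ, ρ r (z + 2 * Real.pi) = ρ r z)
    (hρt : ∀ r ∈ Set.Icc s t, ∀ z : ℝ, HasDerivAt (fun r' => ρ r' z) (ρt r z) r)
    (hρz : ∀ r ∈ Set.Icc s t, ∀ z : ℝ, HasDerivAt (fun z' => ρ r z') (ρz r z) z)
    (hρzz : ∀ r ∈ Set.Icc s t, ∀ z : ℝ, HasDerivAt (fun z' => ρz r z') (ρzz r z) z)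
    (hmean : ∀ r ∈ Set.Icc s t, (∫ z in (0 : ℝ)..(2 * Real.pi), ρ r z) = 0)
    (hpde : ∀ r ∈ Set.Icc s t, ∀ z : ℝ,
      ρt r z = ρzz r z + ρ r z - 3 * (U r z) ^ 2 * ρ r z) :
    ∫ z in (0 : ℝ)..(2 * Real.pi), (ρ t z) ^ 2
      ≤ ∫ z in (0 : ℝ)..(2 * Real.pi), (ρ s z) ^ 2 := by
  have twopi : (0:ℝ) < 2 * Real.pi := Real.two_pi_pos
  have hsm : s ∈ Set.Icc s t := ⟨le_refl s, hst⟩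
  have htm : t ∈ Set.Icc s t := ⟨hst, le_refl t⟩
  -- slice continuity
  have slice : ∀ G : ℝ → ℝ → ℝ,
      ContinuousOn (fun p : ℝ × ℝ => G p.1 p.2) (Set.Icc s t ×ˢ Set.univ) →
      ∀ r ∈ Set.Icc s t, Continuous fun z => G r z := by
    intro G hG r hr
    have hc : Continuous fun z : ℝ => ((r, z) : ℝ × ℝ) :=
      (continuous_const.prodMk continuous_id)
    exact hG.comp_continuous hc fun z => ⟨hr, Set.mem_univ z⟩
  -- time-slice continuity
  have sliceT : ∀ G : ℝ → ℝ → ℝ,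
      ContinuousOn (fun p : ℝ × ℝ => G p.1 p.2) (Set.Icc s t ×ˢ Set.univ) →
      ∀ z : ℝ, ContinuousOn (fun r => G r z) (Set.Icc s t) := by
    intro G hG z
    have hc : Continuous fun r : ℝ => ((r, z) : ℝ × ℝ) :=
      (continuous_id.prodMk continuous_const)
    exact hG.comp hc.continuousOn fun r hr => ⟨hr, Set.mem_univ z⟩
  -- periodicity of ρz
  have hρzper : ∀ r ∈ Set.Icc s t, ∀ z : ℝ, ρz r (z + 2 * Real.pi) = ρz r z := by
    intro r hr z
    have h2 : HasDerivAt (fun y => ρ r (y + 2 * Real.pi)) (ρz r (z + 2 * Real.pi)) z :=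
      HasDerivAt.comp_add_const z _ (hρz r hr (z + 2 * Real.pi))
    have h3 : (fun y => ρ r (y + 2 * Real.pi)) = fun y => ρ r y := funext (hρper r hr)
    rw [h3] at h2
    exact h2.unique (hρz r hr z)
  -- bounds on the compact set
  have hKsub : Set.Icc s t ×ˢ Set.Icc (0:ℝ) (2 * Real.pi) ⊆ Set.Icc s t ×ˢ Set.univ := by
    intro p hp; exact ⟨hp.1, Set.mem_univ _⟩
  have hK : IsCompact (Set.Icc s t ×ˢ Set.Icc (0:ℝ) (2 * Real.pi)) :=
    (isCompact_Icc).prod isCompact_Icc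
  obtain ⟨C, hC⟩ := hK.exists_bound_of_continuousOn
    (((continuous_const.continuousOn.mul (hρcont.mono hKsub)).mul (hρtcont.mono hKsub)) :
      ContinuousOn (fun p : ℝ × ℝ => 2 * ρ p.1 p.2 * ρt p.1 p.2) _)
  obtain ⟨C₂, hC₂⟩ := hK.exists_bound_of_continuousOn (hρcont.mono hKsub)
  set E : ℝ → ℝ := fun r => ∫ z in (0:ℝ)..(2 * Real.pi), ρ r z ^ 2 with hE
  -- continuity of E
  have hEcont : ContinuousOn E (Set.Icc s t) := by
    have hmain : ContinuousOn
        (fun r => ∫ z, ρ r z ^ 2 ∂(volume.restrict (Set.Ioc (0:ℝ) (2 * Real.pi))))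
        (Set.Icc s t) := by
      apply MeasureTheory.continuousOn_of_dominated
        (bound := fun _ => C₂ ^ 2)
      · intro r hr
        exact ((slice ρ hρcont r hr).pow 2).aestronglyMeasurable
      · intro r hr
        rw [ae_restrict_iff' measurableSet_Ioc]
        refine Filter.Eventually.of_forall fun z hz => ?_
        have hp : ((r, z) : ℝ × ℝ) ∈ Set.Icc s t ×ˢ Set.Icc (0:ℝ) (2 * Real.pi) :=
          ⟨hr, Set.Ioc_subset_Icc_self hz⟩
        have hb := hC₂ _ hp
        rw [Real.norm_eq_abs] at hb ⊢
        rw [_root_.abs_pow]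
        nlinarith [abs_nonneg (ρ r z)]
      · exact integrableOn_const measure_Ioc_lt_top.ne
      · refine Filter.Eventually.of_forall fun z => ?_
        exact (sliceT ρ hρcont z).pow 2
    refine hmain.congr fun r hr => ?_
    rw [hE]
    exact intervalIntegral.integral_of_le twopi.le
  -- derivative of E
  have hEderiv : ∀ r ∈ Set.Ioo s t,
      HasDerivAt E (∫ z in (0:ℝ)..(2 * Real.pi), 2 * ρ r z * ρt r z) r := by
    intro r₀ hr₀
    have hεpos : (0:ℝ) < min (r₀ - s) (t - r₀) :=
      lt_min (by linarith [hr₀.1]) (by linarith [hr₀.2])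
    have hball : Metric.ball r₀ (min (r₀ - s) (t - r₀)) ⊆ Set.Icc s t := by
      intro x hx
      rw [Metric.mem_ball, Real.dist_eq] at hx
      have h1 := abs_lt.1 hx
      have h2 := min_le_left (r₀ - s) (t - r₀)
      have h3 := min_le_right (r₀ - s) (t - r₀)
      constructor <;> linarith
    have hr₀I : r₀ ∈ Set.Icc s t := Set.mem_Icc_of_Ioo hr₀
    have H := intervalIntegral.hasDerivAt_integral_of_dominated_loc_of_deriv_le
      (F := fun x z => ρ x z ^ 2) (F' := fun x z => 2 * ρ x z * ρt x z)
      (bound := fun _ => C) (a := 0) (b := 2 * Real.pi) (μ := volume)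
      (Metric.ball_mem_nhds r₀ hεpos)
      (by
        filter_upwards [Metric.ball_mem_nhds r₀ hεpos] with x hx
        exact ((slice ρ hρcont x (hball hx)).pow 2).aestronglyMeasurable)
      (((slice ρ hρcont r₀ hr₀I).pow 2).intervalIntegrable _ _)
      (((continuous_const.mul (slice ρ hρcont r₀ hr₀I)).mul
          (slice ρt hρtcont r₀ hr₀I)).aestronglyMeasurable)
      (by
        refine Filter.Eventually.of_forall fun z hz x hx => ?_
        rw [Set.uIoc_of_le twopi.le] at hz
        exact hC (x, z) ⟨hball hx, Set.Ioc_subset_Icc_self hz⟩)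
      (intervalIntegrable_const)
      (by
        refine Filter.Eventually.of_forall fun z hz x hx => ?_
        have h := (hρt x (hball hx) z).fun_pow 2
        simpa [pow_one] using h)
    exact H.2
  -- the derivative is nonpositive
  have hDnonpos : ∀ r ∈ Set.Ioo s t,
      (∫ z in (0:ℝ)..(2 * Real.pi), 2 * ρ r z * ρt r z) ≤ 0 := by
    intro r hr
    have hrI : r ∈ Set.Icc s t := Set.mem_Icc_of_Ioo hr
    have hρr : Continuous fun z => ρ r z :=
      continuous_iff_continuousAt.2 fun z => (hρz r hrI z).continuousAt
    have hρzr : Continuous fun z => ρz r z :=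
      continuous_iff_continuousAt.2 fun z => (hρzz r hrI z).continuousAt
    have hρzzr : Continuous fun z => ρzz r z := slice ρzz hρzzcont r hrI
    have hUr : Continuous fun z => U r z := slice U hUcont r hrI
    have i1 : IntervalIntegrable (fun z => ρ r z * ρzz r z) volume 0 (2 * Real.pi) :=
      (hρr.mul hρzzr).intervalIntegrable _ _
    have i2 : IntervalIntegrable (fun z => ρ r z ^ 2) volume 0 (2 * Real.pi) :=
      (hρr.pow 2).intervalIntegrable _ _
    have i3 : IntervalIntegrable (fun z => U r z ^ 2 * ρ r z ^ 2) volume 0 (2 * Real.pi) :=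
      ((hUr.pow 2).mul (hρr.pow 2)).intervalIntegrable _ _
    have step1 : (∫ z in (0:ℝ)..(2 * Real.pi), 2 * ρ r z * ρt r z)
        = ∫ z in (0:ℝ)..(2 * Real.pi),
            (2 * (ρ r z * ρzz r z) + 2 * ρ r z ^ 2 - 6 * (U r z ^ 2 * ρ r z ^ 2)) := by
      apply intervalIntegral.integral_congr
      intro z _
      dsimp only
      rw [hpde r hrI z]; ring
    have split : (∫ z in (0:ℝ)..(2 * Real.pi),
          (2 * (ρ r z * ρzz r z) + 2 * ρ r z ^ 2 - 6 * (U r z ^ 2 * ρ r z ^ 2)))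
        = 2 * (∫ z in (0:ℝ)..(2 * Real.pi), ρ r z * ρzz r z)
          + 2 * (∫ z in (0:ℝ)..(2 * Real.pi), ρ r z ^ 2)
          - 6 * (∫ z in (0:ℝ)..(2 * Real.pi), U r z ^ 2 * ρ r z ^ 2) := by
      rw [intervalIntegral.integral_sub ((i1.const_mul 2).add (i2.const_mul 2)) (i3.const_mul 6),
        intervalIntegral.integral_add (i1.const_mul 2) (i2.const_mul 2),
        intervalIntegral.integral_const_mul, intervalIntegral.integral_const_mul,
        intervalIntegral.integral_const_mul]
    have ibp : (∫ z in (0:ℝ)..(2 * Real.pi), ρ r z * ρzz r z)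
        = - ∫ z in (0:ℝ)..(2 * Real.pi), ρz r z ^ 2 := by
      have h := intervalIntegral.integral_mul_deriv_eq_deriv_mul
        (a := (0:ℝ)) (b := 2 * Real.pi) (u := fun z => ρ r z) (v := fun z => ρz r z)
        (u' := fun z => ρz r z) (v' := fun z => ρzz r z)
        (fun x _ => hρz r hrI x) (fun x _ => hρzz r hrI x)
        (hρzr.intervalIntegrable _ _) (hρzzr.intervalIntegrable _ _)
      rw [h]
      have e1 : ρ r (2 * Real.pi) = ρ r 0 := by
        have := hρper r hrI 0; rwa [zero_add] at this
      have e2 : ρz r (2 * Real.pi) = ρz r 0 := by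
        have := hρzper r hrI 0; rwa [zero_add] at this
      rw [e1, e2]
      have e3 : (∫ z in (0:ℝ)..(2 * Real.pi), ρz r z * ρz r z)
          = ∫ z in (0:ℝ)..(2 * Real.pi), ρz r z ^ 2 := by
        apply intervalIntegral.integral_congr
        intro z _
        dsimp only
        ring
      rw [e3]; ring
    have hwir := wirtinger_aux (fun z => ρ r z) (fun z => ρz r z) hρzr
      (hρz r hrI) (hρper r hrI) (hmean r hrI)
    have hnn : 0 ≤ ∫ z in (0:ℝ)..(2 * Real.pi), U r z ^ 2 * ρ r z ^ 2 :=
      intervalIntegral.integral_nonneg twopi.le fun z _ => by positivity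
    rw [step1, split, ibp]
    linarith
  -- conclude by monotonicity
  have hanti : AntitoneOn E (Set.Icc s t) := by
    apply antitoneOn_of_deriv_nonpos (convex_Icc s t) hEcont
    · intro x hx
      rw [interior_Icc] at hx
      exact (hEderiv x hx).differentiableAt.differentiableWithinAt
    · intro x hx
      rw [interior_Icc] at hx
      rw [(hEderiv x hx).deriv]
      exact hDnonpos x hx
  exact hanti hsm htm hst
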